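/- Let A be a commutative complex Banach algebra with identity 1, let a ∈ A, and suppose there exist elements b_1, …, b_p ∈ A and a strictly increasing sequence (n_k) of positive integers such that a^{n_k} b_i → b_i for every i = 1, …, p. If there exist δ > 0 and a dense subset D of the maximal ideal space X of A such that Σ_{i=1}^p |φ(b_i)| ≥ δ for every φ ∈ D, then ‖a^{n_k} − 1‖ → 0; in particular M_a is recurrent. -/

import Mathlib

open Filter Topology

/-- Suppose `b₁, …, b_p` are recurrent with the same strictly increasing
sequence `(n_k)` of positive integers for the multiplication operator `M_a` on a
commutative complex Banach algebra `A`, and that `Σᵢ |φ(bᵢ)| ≥ δ > 0` for all `φ` in a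
dense subset of the character space of `A`.  Then `‖a^{n_k} - 1‖ → 0`; in particular
`M_a` is recurrent. -/
theorem recurrent_of_gelfand_bounded_below
    (A : Type*) [NormedCommRing A] [NormedAlgebra ℂ A] [CompleteSpace A]
    (a : A) (p : ℕ) (b : Fin p → A)
    (n : ℕ → ℕ) (hmono : StrictMono n) (hpos : ∀ k, 0 < n k)
    (hb : ∀ i : Fin p, Tendsto (fun k => a ^ n k * b i) atTop (𝓝 (b i)))
    (δ : ℝ) (hδ : 0 < δ)
    (D : Set (WeakDual.characterSpace ℂ A)) (hD : Dense D)
    (hlow : ∀ φ ∈ D, δ ≤ ∑ i : Fin p, ‖φ (b i)‖) :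
    Tendsto (fun k => ‖a ^ n k - 1‖) atTop (𝓝 0) ∧
    Dense {x : A | ∃ m : ℕ → ℕ, StrictMono m ∧ (∀ j, 0 < m j) ∧
      Tendsto (fun j => a ^ m j * x) atTop (𝓝 x)} := by
  -- Step 1: the lower bound holds on the whole character space, by continuity and density.
  have hlow' : ∀ φ : WeakDual.characterSpace ℂ A,
      δ ≤ ∑ i : Fin p, ‖φ (b i)‖ := by
    intro φ
    have hcont : Continuous fun ψ : WeakDual.characterSpace ℂ A =>
        ∑ i : Fin p, ‖ψ (b i)‖ := by
      apply continuous_finset_sum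
      intro i _
      exact continuous_norm.comp ((WeakDual.eval_continuous (b i)).comp
        continuous_subtype_val)
    have hclosed : IsClosed {ψ : WeakDual.characterSpace ℂ A |
        δ ≤ ∑ i : Fin p, ‖ψ (b i)‖} :=
      isClosed_le continuous_const hcont
    have : D ⊆ {ψ : WeakDual.characterSpace ℂ A |
        δ ≤ ∑ i : Fin p, ‖ψ (b i)‖} := fun ψ hψ => hlow ψ hψ
    have := hclosed.closure_subset_iff.mpr this
    exact this (hD φ)
  -- Step 2: the ideal generated by the `b i` is all of `A`.
  have hspan : Ideal.span (Set.range b) = ⊤ := by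
    by_contra h
    obtain ⟨M, hM, hle⟩ := Ideal.exists_le_maximal _ h
    have hzero : ∀ i, (M.toCharacterSpace : WeakDual.characterSpace ℂ A) (b i) = 0 := by
      intro i
      exact M.toCharacterSpace_apply_eq_zero_of_mem
        (hle (Ideal.subset_span (Set.mem_range_self i)))
    have := hlow' M.toCharacterSpace
    simp only [hzero, norm_zero, Finset.sum_const_zero] at this
    exact absurd this (not_le.mpr hδ)
  -- Step 3: write `1` as a combination of the `b i`.
  have h1 : (1 : A) ∈ Ideal.span (Set.range b) := hspan ▸ Submodule.mem_top
  rw [Ideal.span, Submodule.mem_span_range_iff_exists_fun] at h1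
  obtain ⟨c, hc⟩ := h1
  -- Step 4: `a ^ n k - 1 → 0` in norm.
  have key : Tendsto (fun k => a ^ n k - 1) atTop (𝓝 0) := by
    have : ∀ k, a ^ n k - 1 = ∑ i : Fin p, c i • (a ^ n k * b i - b i) := by
      intro k
      calc a ^ n k - 1 = a ^ n k * (∑ i : Fin p, c i • b i) - ∑ i : Fin p, c i • b i := by
            rw [hc]; ring
        _ = ∑ i : Fin p, c i • (a ^ n k * b i - b i) := by
            rw [Finset.mul_sum]
            rw [← Finset.sum_sub_distrib]
            congr 1; ext i
            rw [smul_sub, mul_smul_comm]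
    simp only [this]
    have : Tendsto (fun k => ∑ i : Fin p, c i • (a ^ n k * b i - b i)) atTop
        (𝓝 (∑ i : Fin p, (0 : A))) := by
      apply tendsto_finset_sum
      intro i _
      have h0 : Tendsto (fun k => a ^ n k * b i - b i) atTop (𝓝 0) := by
        have := (hb i).sub (tendsto_const_nhds (x := b i))
        simpa using this
      have := h0.const_smul (c i)
      simpa using this
    simpa using this
  have hnorm : Tendsto (fun k => ‖a ^ n k - 1‖) atTop (𝓝 0) := by
    have := key.norm
    simpa using this
  refine ⟨hnorm, ?_⟩
  -- Step 5: every `x` is recurrent, so the set is dense.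
  intro x
  apply subset_closure
  refine ⟨n, hmono, hpos, ?_⟩
  have : Tendsto (fun k => (a ^ n k - 1) * x) atTop (𝓝 0) := by
    have := key.mul_const x
    simpa using this
  have := this.add (tendsto_const_nhds (x := x))
  simpa [sub_mul] using this
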